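/- For every symbolic run σ of a DDSA B of length n abstracting a run ρ: (b₀,α₀) →a₁ ... →aₙ (bₙ,αₙ), and every verification constraint sequence C⃗ = ⟨C₀,...,Cₙ⟩ such that αᵢ satisfies all constraints in Cᵢ for all 0 ≤ i ≤ n, the final assignment αₙ satisfies the history constraint hist(σ, C⃗). -/

import Mathlib

namespace DDS

inductive Trm (X D : Type) where
  | var : X → Trm X D
  | const : D → Trm X D
  | add : Trm X D → Trm X D → Trm X D
  | sub : Trm X D → Trm X D → Trm X D

def Trm.eval {X D : Type} [Add D] [Sub D] (α : X → D) : Trm X D → D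
  | .var x => α x
  | .const c => c
  | .add s t => s.eval α + t.eval α
  | .sub s t => s.eval α - t.eval α

def Trm.vars {X D : Type} : Trm X D → Set X
  | .var x => {x}
  | .const _ => ∅
  | .add s t => s.vars ∪ t.vars
  | .sub s t => s.vars ∪ t.vars

def Trm.consts {X D : Type} : Trm X D → Set D
  | .var _ => ∅
  | .const c => {c}
  | .add s t => s.consts ∪ t.consts
  | .sub s t => s.consts ∪ t.consts

/-- Conjunctions of linear arithmetic constraints (Definition 1), with the
trivially true constraint `tru` (the empty conjunction). -/
inductive Constr (X D : Type) where
  | tru : Constr X D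
  | eq : Trm X D → Trm X D → Constr X D
  | ne : Trm X D → Trm X D → Constr X D
  | lt : Trm X D → Trm X D → Constr X D
  | le : Trm X D → Trm X D → Constr X D
  | and : Constr X D → Constr X D → Constr X D

def Constr.holds {X D : Type} [Add D] [Sub D] [LT D] [LE D] (α : X → D) :
    Constr X D → Prop
  | .tru => True
  | .eq s t => s.eval α = t.eval α
  | .ne s t => s.eval α ≠ t.eval α
  | .lt s t => s.eval α < t.eval α
  | .le s t => s.eval α ≤ t.eval α
  | .and c d => c.holds α ∧ d.holds α

def Constr.vars {X D : Type} : Constr X D → Set X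
  | .tru => ∅
  | .eq s t => s.vars ∪ t.vars
  | .ne s t => s.vars ∪ t.vars
  | .lt s t => s.vars ∪ t.vars
  | .le s t => s.vars ∪ t.vars
  | .and c d => c.vars ∪ d.vars

def Constr.consts {X D : Type} : Constr X D → Set D
  | .tru => ∅
  | .eq s t => s.consts ∪ t.consts
  | .ne s t => s.consts ∪ t.consts
  | .lt s t => s.consts ∪ t.consts
  | .le s t => s.consts ∪ t.consts
  | .and c d => c.consts ∪ d.consts

/-- A data-aware dynamic system with arithmetic (Definition 2).  Guards are
constraints over read variables (`Sum.inl`) and write variables (`Sum.inr`). -/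
structure DDSA (B A X D : Type) where
  init : B
  trans : B → A → Option B
  final : Set B
  a0 : X → D
  guard : A → Constr (X ⊕ X) D

variable {B A X D : Type} [Add D] [Sub D] [LT D] [LE D]

/-- `write(a)`: variables whose write copy occurs in the guard of `a`. -/
def DDSA.writes (M : DDSA B A X D) (a : A) : Set X :=
  {x | Sum.inr x ∈ (M.guard a).vars}

/-- Semantics of the transition formula
`Δ_a = guard(a) ∧ ⋀_{v ∉ write(a)} v^w = v^r`. -/
def DDSA.deltaHolds (M : DDSA B A X D) (a : A) (β : X ⊕ X → D) : Prop :=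
  (M.guard a).holds β ∧ ∀ v, v ∉ M.writes a → β (Sum.inr v) = β (Sum.inl v)

/-- A step `(b, α) →a (b', α')` of the DDSA. -/
def DDSA.step (M : DDSA B A X D) (b : B) (α : X → D) (a : A) (b' : B)
    (α' : X → D) : Prop :=
  M.trans b a = some b' ∧ (M.guard a).holds (Sum.elim α α') ∧
    ∀ v, v ∉ M.writes a → α' v = α v

/-- Symbolic runs: paths in the transition graph. -/
inductive DDSA.SymRun (M : DDSA B A X D) : B → List A → B → Prop where
  | nil (b : B) : DDSA.SymRun M b [] b
  | cons {b b' b'' : B} {a : A} {as : List A} :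
      M.trans b a = some b' → DDSA.SymRun M b' as b'' →
      DDSA.SymRun M b (a :: as) b''

/-- Runs with explicit intermediate assignments: each list entry records the
action taken and the assignment reached after it. -/
inductive DDSA.RunSteps (M : DDSA B A X D) :
    B → (X → D) → List (A × (X → D)) → B → Prop where
  | nil (b : B) (α : X → D) : DDSA.RunSteps M b α [] b
  | cons {b b' b'' : B} {α α' : X → D} {a : A} {l : List (A × (X → D))} :
      M.step b α a b' α' → DDSA.RunSteps M b' α' l b'' →
      DDSA.RunSteps M b α ((a, α') :: l) b''

/-- An assignment satisfies a set of constraints. -/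
def csHolds (α : X → D) (C : Set (Constr X D)) : Prop := ∀ c ∈ C, c.holds α

/-- Semantics of `update(φ, a) = ∃U. φ(U) ∧ Δ_a(U, V)`. -/
def DDSA.updateSem (M : DDSA B A X D) (P : (X → D) → Prop) (a : A) :
    (X → D) → Prop :=
  fun α' => ∃ α, P α ∧ M.deltaHolds a (Sum.elim α α')

/-- Semantics of `⋀(C_{α₀} ∪ C)`. -/
def DDSA.initPred (M : DDSA B A X D) (C : Set (Constr X D)) : (X → D) → Prop :=
  fun α => (∀ v, α v = M.a0 v) ∧ csHolds α C

/-- Semantics of the history constraint `hist(σ, C⃗)` (Definition 7), where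
the symbolic run and the verification constraint sequence are paired up:
`C0` is the constraint set attached to the initial position, and each list
entry pairs an action with the constraint set of the position it reaches. -/
def DDSA.hist (M : DDSA B A X D) (C0 : Set (Constr X D))
    (steps : List (A × Set (Constr X D))) : (X → D) → Prop :=
  steps.foldl (fun P p => fun α => M.updateSem P p.1 α ∧ csHolds α p.2)
    (M.initPred C0)

/-- Logical equivalence. -/
def eqv {X D : Type} (P Q : (X → D) → Prop) : Prop := ∀ α, P α ↔ Q α

/-- `P` is (equivalent to) a history constraint of `(M, CC)` whose symbolic
run ends in `b`. -/
def DDSA.HistoryOf (M : DDSA B A X D) (CC : Set (Constr X D)) (b : B)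
    (P : (X → D) → Prop) : Prop :=
  ∃ (C0 : Set (Constr X D)) (steps : List (A × Set (Constr X D))),
    C0 ⊆ CC ∧ (∀ p ∈ steps, p.2 ⊆ CC) ∧
    M.SymRun M.init (steps.map Prod.fst) b ∧ eqv P (M.hist C0 steps)

/-- The characterization of history sets from Lemma 2: closure under initial
constraints and under updates. -/
def DDSA.IsHistorySet (M : DDSA B A X D) (CC : Set (Constr X D))
    (Φ : Set (B × ((X → D) → Prop))) : Prop :=
  (∀ C ⊆ CC, ∃ Q, (M.init, Q) ∈ Φ ∧ eqv Q (M.initPred C)) ∧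
  (∀ b P, (b, P) ∈ Φ → ∀ a b', M.trans b a = some b' → ∀ C ⊆ CC,
    ∃ Q, (b', Q) ∈ Φ ∧ eqv Q (fun α => M.updateSem P a α ∧ csHolds α C))

/-- History sets (Definition 6): `Φ` contains, up to logical equivalence,
exactly the history constraints of `(M, CC)` paired with their end states. -/
def DDSA.IsHistorySetExact (M : DDSA B A X D) (CC : Set (Constr X D))
    (Φ : Set (B × ((X → D) → Prop))) : Prop :=
  (∀ b P, M.HistoryOf CC b P → ∃ Q, (b, Q) ∈ Φ ∧ eqv P Q) ∧
  (∀ b Q, (b, Q) ∈ Φ → M.HistoryOf CC b Q)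

/-- `(M, CC)` has finite summary; by Lemma 3 a finite history set suffices
(taking logical equivalence as the equivalence relation). -/
def DDSA.HasFiniteSummary (M : DDSA B A X D) (CC : Set (Constr X D)) : Prop :=
  ∃ Φ : Set (B × ((X → D) → Prop)), Φ.Finite ∧ M.IsHistorySet CC Φ

/-- Lemma 1, part 1.  If a symbolic run of `M` abstracts a
run `(b₀,α₀) →a₁ … →aₙ (bₙ,αₙ)` and every intermediate assignment `αᵢ`
satisfies its verification constraint set `Cᵢ`, then the final assignment
`αₙ` satisfies the history constraint `hist(σ, C⃗)`.  Each list entry of `l`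
records the action of a step, the verification constraint set attached to the
position reached, and the assignment reached. -/
theorem hist_sound (B A X D : Type) [Add D] [Sub D] [LT D] [LE D]
    (M : DDSA B A X D) (C0 : Set (Constr X D))
    (l : List (A × Set (Constr X D) × (X → D))) (bn : B)
    (h0 : csHolds M.a0 C0)
    (hrun : M.RunSteps M.init M.a0 (l.map fun t => (t.1, t.2.2)) bn)
    (hC : ∀ t ∈ l, csHolds t.2.2 t.2.1) :
    M.hist C0 (l.map fun t => (t.1, t.2.1))
      ((l.map fun t => t.2.2).getLastD M.a0) := by
  have key : ∀ (l : List (A × Set (Constr X D) × (X → D)))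
      (P : (X → D) → Prop) (b : B) (α : X → D), P α →
      M.RunSteps b α (l.map fun t => (t.1, t.2.2)) bn →
      (∀ t ∈ l, csHolds t.2.2 t.2.1) →
      (l.map fun t => (t.1, t.2.1)).foldl
        (fun P p => fun α => M.updateSem P p.1 α ∧ csHolds α p.2) P
        ((l.map fun t => t.2.2).getLastD α) := by
    intro l
    induction l with
    | nil => intro P b α hP _ _; simpa using hP
    | cons t rest ih =>
      intro P b α hP hrun hC
      cases hrun with
      | cons hstep hrest =>
        simp only [List.map_cons, List.getLastD_cons, List.foldl_cons]
        refine ih _ _ _ ?_ hrest (fun u hu => hC u (List.mem_cons_of_mem _ hu))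
        refine ⟨⟨α, hP, hstep.2.1, hstep.2.2⟩, hC t List.mem_cons_self⟩
  exact key l (M.initPred C0) M.init M.a0 ⟨fun v => rfl, h0⟩ hrun hC

end DDS
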